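/- Let f : ℝ^d → ℝ^d be continuously differentiable, x ∈ ℝ^d, r > 0, c > 0, and suppose σ(Df(y)) ≥ c for every y in the open ball B(x, r), where σ denotes the co-norm. Then f(B(x, r)) ⊇ B(f(x), c r / 2); that is, every point at distance less than c r / 2 from f(x) lies in the image of the open ball B(x, r) under f. -/

import Mathlib

/-- The co-norm (minimal norm) of a continuous linear map:
`conorm A = inf_{v ≠ 0} ‖A v‖ / ‖v‖`. -/
noncomputable def conorm {E F : Type*} [NormedAddCommGroup E] [NormedAddCommGroup F]
    [NormedSpace ℝ E] [NormedSpace ℝ F] (A : E →L[ℝ] F) : ℝ :=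
  ⨅ v : {v : E // v ≠ 0}, ‖A v.1‖ / ‖v.1‖

lemma conorm_bound {E F : Type*} [NormedAddCommGroup E] [NormedAddCommGroup F]
    [NormedSpace ℝ E] [NormedSpace ℝ F] (A : E →L[ℝ] F) {c : ℝ} (h : c ≤ conorm A) (v : E) :
    c * ‖v‖ ≤ ‖A v‖ := by
  rcases eq_or_ne v 0 with rfl | hv
  · simp
  · have hbdd : BddBelow (Set.range fun v : {v : E // v ≠ 0} => ‖A v.1‖ / ‖v.1‖) := by
      refine ⟨0, ?_⟩
      rintro _ ⟨u, rfl⟩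
      positivity
    have h1 : conorm A ≤ ‖A v‖ / ‖v‖ := ciInf_le hbdd ⟨v, hv⟩
    have h2 : c ≤ ‖A v‖ / ‖v‖ := h.trans h1
    have hv' : (0 : ℝ) < ‖v‖ := norm_pos_iff.2 hv
    rw [le_div_iff₀ hv'] at h2
    linarith

set_option maxHeartbeats 1600000 in
/-- Quantitative image inclusion: if `f : ℝ^d → ℝ^d` is `C¹` and `σ(Df(y)) ≥ c` on the
ball `B(x, r)`, then `f(B(x, r)) ⊇ B(f(x), c r / 2)`. -/
theorem stmt11 {d : ℕ} (f : EuclideanSpace ℝ (Fin d) → EuclideanSpace ℝ (Fin d))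
    (hf : ContDiff ℝ 1 f) (x : EuclideanSpace ℝ (Fin d)) (r c : ℝ) (hr : 0 < r) (hc : 0 < c)
    (hσ : ∀ y ∈ Metric.ball x r, c ≤ conorm (fderiv ℝ f y)) :
    Metric.ball (f x) (c * r / 2) ⊆ f '' Metric.ball x r := by
  rcases subsingleton_or_nontrivial (EuclideanSpace ℝ (Fin d)) with hsub | hnt
  · -- degenerate case: conorm is an empty infimum, contradiction with `hσ`
    exfalso
    have h0 := hσ x (Metric.mem_ball_self hr)
    have hempty : IsEmpty {v : EuclideanSpace ℝ (Fin d) // v ≠ 0} :=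
      ⟨fun v => v.2 (Subsingleton.elim _ _)⟩
    have : conorm (fderiv ℝ f x) = 0 := by
      rw [conorm, @iInf_of_isEmpty _ _ _ hempty, Real.sInf_empty]
    linarith
  intro z hz
  have hδ : ‖z - f x‖ < c * r / 2 := by
    simpa [dist_eq_norm] using hz
  set δ := ‖z - f x‖ with hδdef
  have hδ0 : 0 ≤ δ := norm_nonneg _
  -- choose c' with 2δ/r < c' < c
  set c' : ℝ := (2 * δ / r + c) / 2 with hc'def
  have h2δr : 2 * δ / r < c := by
    rw [div_lt_iff₀ hr]; linarith
  have hc'pos : 0 < c' := by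
    have : 0 ≤ 2 * δ / r := by positivity
    simp only [hc'def]; linarith
  have hc'lt : c' < c := by simp only [hc'def]; linarith
  have hρ : δ / c' < r / 2 := by
    rw [div_lt_iff₀ hc'pos]
    have h1 : 2 * δ / r < c' := by simp only [hc'def]; linarith
    rw [div_lt_iff₀ hr] at h1
    nlinarith
  set ρ : ℝ := δ / c' with hρdef
  have hρ0 : 0 ≤ ρ := by positivity
  have hρδ : c' * ρ = δ := by
    rw [hρdef, mul_div_cancel₀ _ (ne_of_gt hc'pos)]
  -- pointwise derivative lower bound
  have key : ∀ y ∈ Metric.ball x r, ∀ v : EuclideanSpace ℝ (Fin d), c * ‖v‖ ≤ ‖fderiv ℝ f y v‖ :=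
    fun y hy v => conorm_bound _ (hσ y hy) v
  -- the continuation set
  set S : Set ℝ :=
    {t | t ∈ Set.Icc (0:ℝ) 1 ∧ ∃ y : EuclideanSpace ℝ (Fin d), ‖y - x‖ ≤ t * ρ ∧ f y = f x + t • (z - f x)} with hSdef
  have hS0 : (0:ℝ) ∈ S := ⟨⟨le_refl 0, zero_le_one⟩, x, by simp, by simp⟩
  have hSne : S.Nonempty := ⟨0, hS0⟩
  have hSsub : S ⊆ Set.Icc (0:ℝ) 1 := fun t ht => ht.1
  have hSbdd : BddAbove S := ⟨1, fun t ht => (hSsub ht).2⟩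
  -- S is compact
  have hScomp : IsCompact S := by
    have hSim : S = Prod.fst '' {p : ℝ × EuclideanSpace ℝ (Fin d) | p.1 ∈ Set.Icc (0:ℝ) 1 ∧ ‖p.2 - x‖ ≤ p.1 * ρ ∧
        f p.2 = f x + p.1 • (z - f x)} := by
      ext t
      constructor
      · rintro ⟨ht, y, hy1, hy2⟩; exact ⟨(t, y), ⟨ht, hy1, hy2⟩, rfl⟩
      · rintro ⟨⟨t', y⟩, ⟨ht, hy1, hy2⟩, rfl⟩; exact ⟨ht, y, hy1, hy2⟩
    rw [hSim]
    apply IsCompact.image _ continuous_fst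
    apply IsCompact.of_isClosed_subset
      ((isCompact_Icc (a := (0:ℝ)) (b := 1)).prod (isCompact_closedBall x ρ))
    · apply IsClosed.inter
      · exact (isClosed_Icc).preimage continuous_fst
      apply IsClosed.inter
      · exact isClosed_le ((continuous_snd.sub continuous_const).norm)
          (continuous_fst.mul continuous_const)
      · exact isClosed_eq (hf.continuous.comp continuous_snd)
          (continuous_const.add (continuous_fst.smul continuous_const))
    · rintro ⟨t, y⟩ ⟨ht, hy1, _⟩
      refine ⟨ht, ?_⟩
      simp only [Metric.mem_closedBall, dist_eq_norm]
      calc ‖y - x‖ ≤ t * ρ := hy1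
        _ ≤ 1 * ρ := mul_le_mul_of_nonneg_right ht.2 hρ0
        _ = ρ := one_mul ρ
  set T : ℝ := sSup S with hTdef
  have hTS : T ∈ S := hScomp.sSup_mem hSne
  obtain ⟨hTmem, y, hy1, hy2⟩ := hTS
  have hyρ : ‖y - x‖ ≤ ρ := hy1.trans (by
    calc T * ρ ≤ 1 * ρ := mul_le_mul_of_nonneg_right hTmem.2 hρ0
      _ = ρ := one_mul ρ)
  have hyball : y ∈ Metric.ball x r := by
    rw [Metric.mem_ball, dist_eq_norm]
    linarith
  -- main claim : T = 1
  have hT1 : T = 1 := by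
    by_contra hne
    have hTlt : T < 1 := lt_of_le_of_ne hTmem.2 hne
    rcases eq_or_lt_of_le hδ0 with hδz | hδpos
    · -- δ = 0 : then 1 ∈ S directly, contradiction with T < 1
      have hzsub : z - f x = 0 := norm_eq_zero.1 hδz.symm
      have h1S : (1:ℝ) ∈ S := by
        refine ⟨⟨zero_le_one, le_refl 1⟩, x, by simp [hρ0], by simp [hzsub]⟩
      have := le_csSup hSbdd h1S
      linarith
    -- build the linear equivalence at y
    set A₀ : EuclideanSpace ℝ (Fin d) →L[ℝ] EuclideanSpace ℝ (Fin d) := fderiv ℝ f y with hA₀def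
    have hA₀low : ∀ v : EuclideanSpace ℝ (Fin d), c * ‖v‖ ≤ ‖A₀ v‖ := key y hyball
    have hinj : Function.Injective A₀ := by
      intro v w hvw
      have h1 : A₀ (v - w) = 0 := by rw [map_sub, hvw, sub_self]
      have h2 : c * ‖v - w‖ ≤ 0 := by simpa [h1] using hA₀low (v - w)
      have h3 : (0:ℝ) ≤ ‖v - w‖ := norm_nonneg _
      have h4 : ‖v - w‖ = 0 := by nlinarith
      rw [norm_eq_zero, sub_eq_zero] at h4
      exact h4
    have hsurj : Function.Surjective (A₀ : EuclideanSpace ℝ (Fin d) →ₗ[ℝ] EuclideanSpace ℝ (Fin d)) :=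
      LinearMap.injective_iff_surjective.1 hinj
    set Aeq : EuclideanSpace ℝ (Fin d) ≃ₗ[ℝ] EuclideanSpace ℝ (Fin d) := LinearEquiv.ofBijective (A₀ : EuclideanSpace ℝ (Fin d) →ₗ[ℝ] EuclideanSpace ℝ (Fin d)) ⟨hinj, hsurj⟩ with hAeqdef
    set A : EuclideanSpace ℝ (Fin d) ≃L[ℝ] EuclideanSpace ℝ (Fin d) := Aeq.toContinuousLinearEquiv with hAdef
    have hAcoe : ∀ v : EuclideanSpace ℝ (Fin d), A v = A₀ v := fun v => rfl
    have hAcoe' : (A : EuclideanSpace ℝ (Fin d) →L[ℝ] EuclideanSpace ℝ (Fin d)) = A₀ := by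
      exact ContinuousLinearMap.ext hAcoe
    -- bound on the inverse
    have hAsymm : ∀ w : EuclideanSpace ℝ (Fin d), ‖A.symm w‖ ≤ c⁻¹ * ‖w‖ := by
      intro w
      have h1 : A (A.symm w) = w := A.apply_symm_apply w
      have h2 : c * ‖A.symm w‖ ≤ ‖w‖ := by
        have := hA₀low (A.symm w)
        rwa [← hAcoe, h1] at this
      rw [← le_div_iff₀' hc] at h2
      rw [div_eq_inv_mul] at h2
      exact h2
    have hANnorm : ‖(A.symm : EuclideanSpace ℝ (Fin d) →L[ℝ] EuclideanSpace ℝ (Fin d))‖ ≤ c⁻¹ := by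
      apply ContinuousLinearMap.opNorm_le_bound _ (by positivity)
      exact hAsymm
    have hANpos : 0 < ‖(A.symm : EuclideanSpace ℝ (Fin d) →L[ℝ] EuclideanSpace ℝ (Fin d))‖ := by
      obtain ⟨v, hv⟩ := exists_ne (0 : EuclideanSpace ℝ (Fin d))
      have h1 : v = A.symm (A v) := (A.symm_apply_apply v).symm
      have h2 : ‖v‖ ≤ ‖(A.symm : EuclideanSpace ℝ (Fin d) →L[ℝ] EuclideanSpace ℝ (Fin d))‖ * ‖A v‖ := by
        conv_lhs => rw [h1]
        exact (A.symm : EuclideanSpace ℝ (Fin d) →L[ℝ] EuclideanSpace ℝ (Fin d)).le_opNorm _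
      have h3 : 0 < ‖v‖ := norm_pos_iff.2 hv
      by_contra hle
      push_neg at hle
      have h4 : ‖(A.symm : EuclideanSpace ℝ (Fin d) →L[ℝ] EuclideanSpace ℝ (Fin d))‖ = 0 := le_antisymm hle (norm_nonneg _)
      rw [h4, zero_mul] at h2
      linarith
    have hNinv : c ≤ ‖(A.symm : EuclideanSpace ℝ (Fin d) →L[ℝ] EuclideanSpace ℝ (Fin d))‖⁻¹ := by
      rw [le_inv_comm₀ hc hANpos]
      exact hANnorm
    -- approximation of f by A near y
    set κ : NNReal := Real.toNNReal (c - c') with hκdef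
    have hκc : (κ : ℝ) = c - c' := Real.coe_toNNReal _ (by linarith)
    have hκpos : 0 < κ := by
      rw [← NNReal.coe_lt_coe, hκc]; push_cast; linarith
    have hAstrict : HasStrictFDerivAt f (A : EuclideanSpace ℝ (Fin d) →L[ℝ] EuclideanSpace ℝ (Fin d)) y := by
      rw [hAcoe']
      exact hf.contDiffAt.hasStrictFDerivAt one_ne_zero
    obtain ⟨s, hs_nhds, happrox⟩ := hAstrict.approximates_deriv_on_nhds (Or.inr hκpos)
    have hmem : s ∩ Metric.ball x r ∈ nhds y :=
      Filter.inter_mem hs_nhds ((Metric.isOpen_ball).mem_nhds hyball)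
    obtain ⟨ε, hεpos, hεsub⟩ := Metric.nhds_basis_closedBall.mem_iff.1 hmem
    have happrox' : ApproximatesLinearOn f (A : EuclideanSpace ℝ (Fin d) →L[ℝ] EuclideanSpace ℝ (Fin d)) (Metric.closedBall y ε) κ :=
      happrox.mono_set fun p hp => (hεsub hp).1
    -- surjectivity onto a small ball around f y
    have hsurjon := happrox'.surjOn_closedBall_of_nonlinearRightInverse
      A.toNonlinearRightInverse (le_of_lt hεpos) subset_rfl
    have hnnnorm : ((A.toNonlinearRightInverse.nnnorm : ℝ))⁻¹ = ‖(A.symm : EuclideanSpace ℝ (Fin d) →L[ℝ] EuclideanSpace ℝ (Fin d))‖⁻¹ := by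
      rfl
    -- radius covered is at least c' * ε
    have hrad : c' * ε ≤ (((A.toNonlinearRightInverse.nnnorm : ℝ))⁻¹ - κ) * ε := by
      apply mul_le_mul_of_nonneg_right _ (le_of_lt hεpos)
      rw [hnnnorm, hκc]
      linarith
    -- the next parameter value
    set t' : ℝ := min 1 (T + c' * ε / δ) with ht'def
    have ht'gt : T < t' := by
      apply lt_min hTlt
      have : 0 < c' * ε / δ := by positivity
      linarith
    have ht'mem : t' ∈ Set.Icc (0:ℝ) 1 := by
      constructor
      · apply le_min zero_le_one
        have : 0 < c' * ε / δ := by positivity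
        linarith [hTmem.1]
      · exact min_le_left _ _
    have hstep : (t' - T) * δ ≤ c' * ε := by
      have h1 : t' ≤ T + c' * ε / δ := min_le_right _ _
      have h2 : t' - T ≤ c' * ε / δ := by linarith
      calc (t' - T) * δ ≤ (c' * ε / δ) * δ := mul_le_mul_of_nonneg_right h2 hδ0
        _ = c' * ε := div_mul_cancel₀ _ (ne_of_gt hδpos)
    -- target point is in the covered ball
    have htarget : f x + t' • (z - f x) ∈
        Metric.closedBall (f y) ((((A.toNonlinearRightInverse.nnnorm : ℝ))⁻¹ - κ) * ε) := by
      rw [Metric.mem_closedBall, dist_eq_norm]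
      have hdiff : f x + t' • (z - f x) - f y = (t' - T) • (z - f x) := by
        rw [hy2]; module
      rw [hdiff, norm_smul, Real.norm_eq_abs, abs_of_nonneg (by linarith : (0:ℝ) ≤ t' - T)]
      exact le_trans hstep hrad
    obtain ⟨y', hy'mem, hy'eq⟩ := hsurjon htarget
    -- expansion bound : ‖y' - y‖ ≤ (t' - T) * δ / c'
    have hyc : y ∈ Metric.closedBall y ε := Metric.mem_closedBall_self (le_of_lt hεpos)
    have happx := happrox' y' hy'mem y hyc
    have hAlow' : c * ‖y' - y‖ ≤ ‖(A : EuclideanSpace ℝ (Fin d) →L[ℝ] EuclideanSpace ℝ (Fin d)) (y' - y)‖ := by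
      rw [hAcoe']; exact hA₀low _
    have hfy' : ‖f y' - f y‖ = (t' - T) * δ := by
      rw [hy'eq, hy2]
      have : f x + t' • (z - f x) - (f x + T • (z - f x)) = (t' - T) • (z - f x) := by
        module
      rw [this, norm_smul, Real.norm_eq_abs, abs_of_nonneg (by linarith : (0:ℝ) ≤ t' - T)]
    have hexp : c' * ‖y' - y‖ ≤ (t' - T) * δ := by
      have h1 : ‖(A : EuclideanSpace ℝ (Fin d) →L[ℝ] EuclideanSpace ℝ (Fin d)) (y' - y)‖ - ‖f y' - f y‖ ≤ (κ : ℝ) * ‖y' - y‖ := by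
        have := norm_sub_norm_le ((A : EuclideanSpace ℝ (Fin d) →L[ℝ] EuclideanSpace ℝ (Fin d)) (y' - y)) (f y' - f y)
        have h2 : ‖(A : EuclideanSpace ℝ (Fin d) →L[ℝ] EuclideanSpace ℝ (Fin d)) (y' - y) - (f y' - f y)‖ ≤ (κ : ℝ) * ‖y' - y‖ := by
          rw [← norm_neg]
          simpa [neg_sub] using happx
        linarith
      rw [hκc] at h1
      rw [← hfy']
      linarith [hAlow']
    have hy'x : ‖y' - x‖ ≤ t' * ρ := by
      have h1 : ‖y' - y‖ ≤ (t' - T) * δ / c' := by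
        rw [le_div_iff₀' hc'pos]; exact hexp
      have h2 : ‖y' - x‖ ≤ ‖y' - y‖ + ‖y - x‖ := norm_sub_le_norm_sub_add_norm_sub y' y x
      have h3 : (t' - T) * δ / c' = (t' - T) * ρ := by
        rw [hρdef]; ring
      rw [h3] at h1
      have h4 : (t' - T) * ρ + T * ρ = t' * ρ := by ring
      linarith
    have ht'S : t' ∈ S := ⟨ht'mem, y', hy'x, hy'eq⟩
    have := le_csSup hSbdd ht'S
    linarith
  -- conclusion
  refine ⟨y, hyball, ?_⟩
  rw [hy2, hT1]
  simp
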